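/- For every real t ≥ 0, every real L ∈ ℝ, and every integer d ≥ 1, the integral ∫₀^∞ x^d · [1/(1+e^{x - t - L/2}) + 1/(1+e^{x - t + L/2})] dx equals d! · (-Li_{d+1}(-e^{t+L/2}) - Li_{d+1}(-e^{t-L/2})), and this quantity is bounded above by a polynomial in t and L with positive leading behavior; in particular it is bounded above by d!·(P_{d+1}(t+L/2) + P_{d+1}(max(t-L/2,0)) + a_{d+1}) where P_{d+1}(s) = s^{d+1}/(d+1)! + (log 2) s^d/d! + Σ_{k=2}^{d+1} a_k s^{d+1-k}/(d+1-k)! and a_k = -Li_k(-1), assuming t ≥ L/2. -/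

import Mathlib

open scoped Nat

/-- The polylogarithm, defined recursively by `Li 1 x = -log (1 - x)` and
`Li (k+1) x = ∫ s in 0..x, Li k s / s`. -/
noncomputable def Li : ℕ → ℝ → ℝ
  | 0, _ => 0
  | 1, x => -Real.log (1 - x)
  | k + 2, x => ∫ s in (0:ℝ)..x, Li (k + 1) s / s

/-- `a_k = -Li_k(-1)`. -/
noncomputable def aCoeff (k : ℕ) : ℝ := -(Li k (-1))

/-- The upper-bound polynomial `P_m(s) = s^m/m! + (log 2) s^{m-1}/(m-1)!
  + Σ_{k=2}^m a_k s^{m-k}/(m-k)!`. -/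
noncomputable def Ppoly (m : ℕ) (s : ℝ) : ℝ :=
  s ^ m / (m ! : ℝ) + Real.log 2 * s ^ (m - 1) / ((m - 1)! : ℝ)
    + ∑ k ∈ Finset.Icc 2 m, aCoeff k * s ^ (m - k) / ((m - k)! : ℝ)

open Set MeasureTheory Filter Topology


lemma Li_one (x : ℝ) : Li 1 x = -Real.log (1 - x) := rfl

lemma Li_succ (m : ℕ) (hm : 1 ≤ m) (x : ℝ) :
    Li (m + 1) x = ∫ s in (0:ℝ)..x, Li m s / s := by
  obtain ⟨k, rfl⟩ := Nat.exists_eq_add_of_le' hm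
  rfl

lemma Li_zero_arg (m : ℕ) : Li m 0 = 0 := by
  match m with
  | 0 => rfl
  | 1 => simp [Li]
  | k + 2 => simp [Li]

def LiProp (m : ℕ) : Prop :=
  ContinuousOn (Li m) (Set.Iic 0) ∧ (∀ x ≤ (0:ℝ), Li m x ≤ 0) ∧
    (∀ x ≤ (0:ℝ), |Li m x| ≤ |x|)

lemma LiProp_one : LiProp 1 := by
  refine ⟨?_, ?_, ?_⟩
  · have : ContinuousOn (fun x : ℝ => -Real.log (1 - x)) (Set.Iic 0) := by
      apply ContinuousOn.neg
      apply ContinuousOn.log ((continuous_const.sub continuous_id).continuousOn)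
      intro x hx
      have hx' : x ≤ 0 := hx
      show (1:ℝ) - x ≠ 0
      intro h; linarith
    exact this
  · intro x hx
    have : (0:ℝ) ≤ Real.log (1 - x) := Real.log_nonneg (by linarith)
    rw [Li_one]; linarith
  · intro x hx
    have h1 : (0:ℝ) ≤ Real.log (1 - x) := Real.log_nonneg (by linarith)
    have h2 : Real.log (1 - x) ≤ (1 - x) - 1 := Real.log_le_sub_one_of_pos (by linarith)
    rw [Li_one, abs_neg, abs_of_nonneg h1, abs_of_nonpos hx]
    linarith

lemma g_abs_le_one {m : ℕ} (hb : ∀ x ≤ (0:ℝ), |Li m x| ≤ |x|) :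
    ∀ s ≤ (0:ℝ), |Li m s / s| ≤ 1 := by
  intro s hs
  rcases eq_or_lt_of_le hs with h | h
  · subst h; simp
  · rw [abs_div]
    exact div_le_one_of_le₀ (hb s hs) (abs_nonneg s)

lemma g_intervalIntegrable {m : ℕ} (hc : ContinuousOn (Li m) (Set.Iic 0))
    (hb : ∀ x ≤ (0:ℝ), |Li m x| ≤ |x|) {x : ℝ} (hx : x ≤ 0) :
    IntervalIntegrable (fun s => Li m s / s) volume 0 x := by
  have hgc : ContinuousOn (fun s => Li m s / s) (Set.Iio 0) :=
    (hc.mono Set.Iio_subset_Iic_self).div continuousOn_id (fun s hs => ne_of_lt hs)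
  rw [intervalIntegrable_iff]
  have huIoc : Set.uIoc 0 x = Set.Ioc x 0 := by
    rw [Set.uIoc_comm, Set.uIoc_of_le hx]
  rw [huIoc]
  have hIoo : IntegrableOn (fun s => Li m s / s) (Set.Ioo x 0) volume := by
    refine Integrable.mono' (g := fun _ => (1:ℝ))
      ((integrableOn_const_iff (C := (1:ℝ))).mpr (Or.inr measure_Ioo_lt_top))
      ((hgc.mono (fun s hs => hs.2)).aestronglyMeasurable measurableSet_Ioo) ?_
    refine ae_restrict_of_forall_mem measurableSet_Ioo (fun s hs => ?_)
    rw [Real.norm_eq_abs]; exact g_abs_le_one hb s hs.2.le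
  exact hIoo.congr_set_ae Ioo_ae_eq_Ioc.symm

lemma Li_hasDerivAt {m : ℕ} (hm : 1 ≤ m) (hc : ContinuousOn (Li m) (Set.Iic 0))
    (hb : ∀ x ≤ (0:ℝ), |Li m x| ≤ |x|) {x : ℝ} (hx : x < 0) :
    HasDerivAt (Li (m + 1)) (Li m x / x) x := by
  have hgc : ContinuousOn (fun s => Li m s / s) (Set.Iio 0) :=
    (hc.mono Set.Iio_subset_Iic_self).div continuousOn_id (fun s hs => ne_of_lt hs)
  have heq : Li (m + 1) = fun u => ∫ s in (0:ℝ)..u, Li m s / s := funext (Li_succ m hm)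
  rw [heq]
  exact intervalIntegral.integral_hasDerivAt_right
    (g_intervalIntegrable hc hb hx.le)
    (hgc.stronglyMeasurableAtFilter isOpen_Iio x hx)
    (hgc.continuousAt (isOpen_Iio.mem_nhds hx))

lemma LiProp_step {m : ℕ} (hm : 1 ≤ m) (h : LiProp m) : LiProp (m + 1) := by
  obtain ⟨hc, hsgn, hb⟩ := h
  have hsgn' : ∀ x ≤ (0:ℝ), Li (m + 1) x ≤ 0 := by
    intro x hx
    rcases eq_or_lt_of_le hx with h | h
    · subst h; simp [Li_zero_arg]
    · rw [Li_succ m hm, intervalIntegral.integral_symm]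
      have : 0 ≤ ∫ s in x..(0:ℝ), Li m s / s := by
        apply intervalIntegral.integral_nonneg hx
        intro u hu
        rcases eq_or_lt_of_le hu.2 with h0 | h0
        · subst h0; simp [Li_zero_arg]
        · exact div_nonneg_of_nonpos (hsgn u hu.2) h0.le
      linarith
  have hb' : ∀ x ≤ (0:ℝ), |Li (m + 1) x| ≤ |x| := by
    intro x hx
    rw [Li_succ m hm, ← Real.norm_eq_abs]
    have := intervalIntegral.norm_integral_le_of_norm_le_const
      (f := fun s => Li m s / s) (a := (0:ℝ)) (b := x) (C := 1) ?_
    · simpa using this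
    · intro s hs
      rw [Set.uIoc_comm, Set.uIoc_of_le hx] at hs
      rw [Real.norm_eq_abs]
      exact g_abs_le_one hb s hs.2
  refine ⟨?_, hsgn', hb'⟩
  intro y hy
  rcases eq_or_lt_of_le (Set.mem_Iic.mp hy) with h | h
  · subst h
    unfold ContinuousWithinAt
    rw [Li_zero_arg]
    refine squeeze_zero_norm' (a := fun x : ℝ => |x|) ?_ ?_
    · exact eventually_nhdsWithin_of_forall (fun x hx => by
        rw [Real.norm_eq_abs]; exact hb' x hx)
    · have : Tendsto (fun x : ℝ => |x|) (𝓝 0) (𝓝 |(0:ℝ)|) :=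
        continuous_abs.tendsto 0
      simpa using this.mono_left nhdsWithin_le_nhds
  · exact (Li_hasDerivAt hm hc hb h).continuousAt.continuousWithinAt

lemma LiProp_holds : ∀ m, 1 ≤ m → LiProp m := by
  intro m hm
  induction m, hm using Nat.le_induction with
  | base => exact LiProp_one
  | succ n hn ih => exact LiProp_step hn ih

lemma F_nonneg (m : ℕ) (hm : 1 ≤ m) (s : ℝ) : 0 ≤ -(Li m (-Real.exp s)) := by
  have := (LiProp_holds m hm).2.1 (-Real.exp s) (neg_nonpos.mpr (Real.exp_pos s).le)
  linarith

lemma F_le (m : ℕ) (hm : 1 ≤ m) (s : ℝ) : -(Li m (-Real.exp s)) ≤ Real.exp s := by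
  have h := (LiProp_holds m hm).2.2 (-Real.exp s) (neg_nonpos.mpr (Real.exp_pos s).le)
  calc -(Li m (-Real.exp s)) ≤ |Li m (-Real.exp s)| := neg_le_abs _
    _ ≤ |(-Real.exp s)| := h
    _ = Real.exp s := by rw [abs_neg, abs_of_pos (Real.exp_pos s)]

lemma F_hasDerivAt (m : ℕ) (hm : 1 ≤ m) (μ : ℝ) :
    HasDerivAt (fun s => -(Li (m + 1) (-Real.exp s))) (-(Li m (-Real.exp μ))) μ := by
  obtain ⟨hc, _, hb⟩ := LiProp_holds m hm
  have hx : -Real.exp μ < 0 := neg_lt_zero.mpr (Real.exp_pos μ)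
  have h2 : HasDerivAt (fun s : ℝ => -Real.exp s) (-Real.exp μ) μ := (Real.hasDerivAt_exp μ).neg
  have h3 := (Li_hasDerivAt hm hc hb hx).comp μ h2
  rw [Function.comp_def, div_mul_cancel₀ _ (ne_of_lt hx)] at h3
  exact h3.neg

lemma F_one (s : ℝ) : -(Li 1 (-Real.exp s)) = Real.log (1 + Real.exp s) := by
  rw [Li_one, neg_neg, sub_neg_eq_add]

lemma F1_hasDerivAt (μ : ℝ) :
    HasDerivAt (fun s => -(Li 1 (-Real.exp s))) (Real.exp μ / (1 + Real.exp μ)) μ := by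
  have h : HasDerivAt (fun s => Real.log (1 + Real.exp s))
      (Real.exp μ / (1 + Real.exp μ)) μ :=
    HasDerivAt.log ((Real.hasDerivAt_exp μ).const_add 1) (by positivity)
  exact (funext F_one ▸ h : _)

lemma F_continuous (m : ℕ) (hm : 1 ≤ m) :
    Continuous (fun s => -(Li m (-Real.exp s))) := by
  rw [continuous_iff_continuousAt]
  intro s
  rcases Nat.exists_eq_add_of_le hm with ⟨k, rfl⟩
  rcases Nat.eq_zero_or_pos k with rfl | hk
  · exact (F1_hasDerivAt s).continuousAt
  · have : (1:ℕ) ≤ k := hk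
    have := F_hasDerivAt k this s
    have h2 : k + 1 = 1 + k := by omega
    rw [h2] at this
    exact this.continuousAt

lemma intOn_pow_exp (k : ℕ) :
    IntegrableOn (fun x : ℝ => x ^ k * Real.exp (-x)) (Ioi (0:ℝ)) volume := by
  have h := Real.GammaIntegral_convergent (s := (k + 1 : ℝ)) (by positivity)
  refine (h.congr_fun (fun x hx => ?_) measurableSet_Ioi)
  have hx' : (0:ℝ) < x := hx
  beta_reduce
  rw [show ((k:ℝ) + 1 - 1) = (k:ℝ) by ring, Real.rpow_natCast, mul_comm]

lemma integrable_F (k m : ℕ) (hm : 1 ≤ m) (μ : ℝ) :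
    IntegrableOn (fun x => x ^ k * (-(Li m (-Real.exp (μ - x))))) (Ioi (0:ℝ)) volume := by
  refine Integrable.mono' (g := fun x => Real.exp μ * (x ^ k * Real.exp (-x)))
    ((intOn_pow_exp k).const_mul _)
    (((continuous_pow k).mul
      ((F_continuous m hm).comp (continuous_const.sub continuous_id))).aestronglyMeasurable) ?_
  refine ae_restrict_of_forall_mem measurableSet_Ioi (fun x hx => ?_)
  have hx' : (0:ℝ) < x := hx
  have h1 : 0 ≤ -(Li m (-Real.exp (μ - x))) := F_nonneg m hm _
  have h2 : -(Li m (-Real.exp (μ - x))) ≤ Real.exp (μ - x) := F_le m hm _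
  rw [Real.norm_eq_abs, abs_of_nonneg (by positivity)]
  calc x ^ k * (-(Li m (-Real.exp (μ - x)))) ≤ x ^ k * Real.exp (μ - x) := by
        exact mul_le_mul_of_nonneg_left h2 (by positivity)
    _ = Real.exp μ * (x ^ k * Real.exp (-x)) := by
        rw [Real.exp_sub, Real.exp_neg]; field_simp

lemma one_div_exp_le (x μ : ℝ) : 1 / (1 + Real.exp (x - μ)) ≤ Real.exp (μ - x) := by
  rw [div_le_iff₀ (by positivity)]
  have h : Real.exp (μ - x) * Real.exp (x - μ) = 1 := by
    rw [← Real.exp_add]; simp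
  nlinarith [Real.exp_pos (μ - x), Real.exp_pos (x - μ)]

lemma integrable_f (k : ℕ) (μ : ℝ) :
    IntegrableOn (fun x => x ^ k * (1 / (1 + Real.exp (x - μ)))) (Ioi (0:ℝ)) volume := by
  refine Integrable.mono' (g := fun x => Real.exp μ * (x ^ k * Real.exp (-x)))
    ((intOn_pow_exp k).const_mul _)
    (((continuous_pow k).mul
      (continuous_const.div (continuous_const.add (Real.continuous_exp.comp (continuous_id.sub continuous_const))) (fun x => by positivity) : Continuous fun x : ℝ => 1 / (1 + Real.exp (x - μ)))).aestronglyMeasurable) ?_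
  refine ae_restrict_of_forall_mem measurableSet_Ioi (fun x hx => ?_)
  have hx' : (0:ℝ) < x := hx
  have h2 := one_div_exp_le x μ
  rw [Real.norm_eq_abs, abs_of_nonneg (by positivity)]
  calc x ^ k * (1 / (1 + Real.exp (x - μ))) ≤ x ^ k * Real.exp (μ - x) :=
        mul_le_mul_of_nonneg_left h2 (by positivity)
    _ = Real.exp μ * (x ^ k * Real.exp (-x)) := by
        rw [Real.exp_sub, Real.exp_neg]; field_simp

lemma tendsto_F (k m : ℕ) (hm : 1 ≤ m) (μ : ℝ) :
    Tendsto (fun x => x ^ k * (Li m (-Real.exp (μ - x)))) atTop (𝓝 0) := by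
  refine squeeze_zero_norm' (a := fun x => Real.exp μ * (x ^ k * Real.exp (-x))) ?_ ?_
  · filter_upwards [eventually_gt_atTop (0:ℝ)] with x hx
    have h1 : 0 ≤ -(Li m (-Real.exp (μ - x))) := F_nonneg m hm _
    have h2 : -(Li m (-Real.exp (μ - x))) ≤ Real.exp (μ - x) := F_le m hm _
    rw [Real.norm_eq_abs, abs_mul, abs_of_pos (by positivity : (0:ℝ) < x ^ k),
      abs_of_nonpos (by linarith : Li m (-Real.exp (μ - x)) ≤ 0)]
    calc x ^ k * -(Li m (-Real.exp (μ - x))) ≤ x ^ k * Real.exp (μ - x) :=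
          mul_le_mul_of_nonneg_left h2 (by positivity)
      _ = Real.exp μ * (x ^ k * Real.exp (-x)) := by
          rw [Real.exp_sub, Real.exp_neg]; field_simp
  · have := (Real.tendsto_pow_mul_exp_neg_atTop_nhds_zero k).const_mul (Real.exp μ)
    simpa using this

lemma Fc_hasDerivAt (m : ℕ) (hm : 1 ≤ m) (μ x : ℝ) :
    HasDerivAt (fun x => Li (m + 1) (-Real.exp (μ - x))) (-(Li m (-Real.exp (μ - x)))) x := by
  have h1 := (F_hasDerivAt m hm (μ - x)).comp x ((hasDerivAt_id x).const_sub μ)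
  have h2 := h1.neg
  simp only [Function.comp_def, neg_neg] at h2
  refine (h2.congr_deriv ?_).congr_of_eventuallyEq (Filter.Eventually.of_forall fun y => by simp)
  ring

lemma F1c_hasDerivAt (μ x : ℝ) :
    HasDerivAt (fun x => Li 1 (-Real.exp (μ - x)))
      (Real.exp (μ - x) / (1 + Real.exp (μ - x))) x := by
  have h1 := (F1_hasDerivAt (μ - x)).comp x ((hasDerivAt_id x).const_sub μ)
  have h2 := h1.neg
  simp only [Function.comp_def, neg_neg] at h2
  refine (h2.congr_deriv ?_).congr_of_eventuallyEq (Filter.Eventually.of_forall fun y => by simp)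
  ring

lemma int_F_eq (m : ℕ) (hm : 1 ≤ m) (μ : ℝ) :
    ∫ x in Ioi (0:ℝ), -(Li m (-Real.exp (μ - x))) = -(Li (m + 1) (-Real.exp μ)) := by
  have h := integral_Ioi_of_hasDerivAt_of_tendsto'
    (f := fun x => Li (m + 1) (-Real.exp (μ - x)))
    (f' := fun x => -(Li m (-Real.exp (μ - x)))) (a := 0) (m := 0)
    (fun x _ => Fc_hasDerivAt m hm μ x)
    (by simpa using integrable_F 0 m hm μ)
    (by simpa using tendsto_F 0 (m + 1) (by omega) μ)
  rw [h]
  simp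

lemma step_int (k m : ℕ) (hm : 1 ≤ m) (μ : ℝ) :
    ∫ x in Ioi (0:ℝ), x ^ (k + 1) * (-(Li m (-Real.exp (μ - x))))
      = (k + 1 : ℝ) * ∫ x in Ioi (0:ℝ), x ^ k * (-(Li (m + 1) (-Real.exp (μ - x)))) := by
  have hderiv : ∀ x ∈ Ici (0:ℝ), HasDerivAt
      (fun x => x ^ (k + 1) * Li (m + 1) (-Real.exp (μ - x)))
      (x ^ (k + 1) * (-(Li m (-Real.exp (μ - x))))
        - (k + 1 : ℝ) * (x ^ k * (-(Li (m + 1) (-Real.exp (μ - x)))))) x := by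
    intro x _
    have h := (hasDerivAt_pow (k + 1) x).mul (Fc_hasDerivAt m hm μ x)
    refine h.congr_deriv ?_
    push_cast
    ring
  have htend : Tendsto (fun x => x ^ (k + 1) * Li (m + 1) (-Real.exp (μ - x))) atTop (𝓝 0) :=
    tendsto_F (k + 1) (m + 1) (by omega) μ
  have hint1 := integrable_F (k + 1) m hm μ
  have hint2 := (integrable_F k (m + 1) (by omega) μ).const_mul (k + 1 : ℝ)
  have hint : IntegrableOn (fun x => x ^ (k + 1) * (-(Li m (-Real.exp (μ - x))))
      - (k + 1 : ℝ) * (x ^ k * (-(Li (m + 1) (-Real.exp (μ - x)))))) (Ioi (0:ℝ)) volume :=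
    hint1.sub hint2
  have h := integral_Ioi_of_hasDerivAt_of_tendsto' hderiv hint htend
  rw [integral_sub hint1 hint2] at h
  simp only [zero_sub] at h
  rw [MeasureTheory.integral_const_mul] at h
  have h0 : -((0:ℝ) ^ (k + 1) * Li (m + 1) (-Real.exp (μ - 0))) = 0 := by simp
  rw [h0] at h
  linarith [h]

lemma S_int (k : ℕ) : ∀ m, 1 ≤ m → ∀ μ : ℝ,
    ∫ x in Ioi (0:ℝ), x ^ k * (-(Li m (-Real.exp (μ - x))))
      = (k ! : ℝ) * (-(Li (m + k + 1) (-Real.exp μ))) := by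
  induction k with
  | zero =>
    intro m hm μ
    simpa using int_F_eq m hm μ
  | succ k ih =>
    intro m hm μ
    rw [step_int k m hm μ, ih (m + 1) (by omega) μ]
    have : m + 1 + k + 1 = m + (k + 1) + 1 := by omega
    rw [this]
    rw [Nat.factorial_succ]
    push_cast
    ring

lemma main_int (d : ℕ) (hd : 1 ≤ d) (μ : ℝ) :
    ∫ x in Ioi (0:ℝ), x ^ d * (1 / (1 + Real.exp (x - μ)))
      = (d ! : ℝ) * (-(Li (d + 1) (-Real.exp μ))) := by
  have fd_eq : ∀ x : ℝ, Real.exp (μ - x) / (1 + Real.exp (μ - x))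
      = 1 / (1 + Real.exp (x - μ)) := by
    intro x
    have h : Real.exp (μ - x) * Real.exp (x - μ) = 1 := by rw [← Real.exp_add]; simp
    rw [div_eq_div_iff (by positivity) (by positivity)]
    nlinarith [Real.exp_pos (μ - x), Real.exp_pos (x - μ)]
  have hderiv : ∀ x ∈ Ici (0:ℝ), HasDerivAt
      (fun x => x ^ d * Li 1 (-Real.exp (μ - x)))
      (x ^ d * (1 / (1 + Real.exp (x - μ)))
        - (d : ℝ) * (x ^ (d - 1) * (-(Li 1 (-Real.exp (μ - x)))))) x := by
    intro x _
    have h := (hasDerivAt_pow d x).mul (F1c_hasDerivAt μ x)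
    refine h.congr_deriv ?_
    rw [fd_eq x]
    ring
  have htend : Tendsto (fun x => x ^ d * Li 1 (-Real.exp (μ - x))) atTop (𝓝 0) :=
    tendsto_F d 1 le_rfl μ
  have hint1 := integrable_f d μ
  have hint2 := (integrable_F (d - 1) 1 le_rfl μ).const_mul (d : ℝ)
  have h := integral_Ioi_of_hasDerivAt_of_tendsto' hderiv (hint1.sub hint2) htend
  rw [integral_sub hint1 hint2, MeasureTheory.integral_const_mul] at h
  have h0 : (0:ℝ) - (0:ℝ) ^ d * Li 1 (-Real.exp (μ - 0)) = 0 := by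
    rw [zero_pow (by omega : d ≠ 0)]; ring
  rw [h0] at h
  have hS := S_int (d - 1) 1 le_rfl μ
  have hd1 : 1 + (d - 1) + 1 = d + 1 := by omega
  rw [hd1] at hS
  rw [hS] at h
  have hfact : (d : ℝ) * ((d - 1)! : ℝ) = (d ! : ℝ) := by
    rw_mod_cast [Nat.mul_factorial_pred (by omega)]
  have hI : ∫ x in Ioi (0:ℝ), x ^ d * (1 / (1 + Real.exp (x - μ)))
      = (d:ℝ) * (((d-1)! : ℝ) * (-(Li (d + 1) (-Real.exp μ)))) := by linarith
  rw [hI, ← mul_assoc, hfact]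



lemma hasDerivAt_mono (n : ℕ) (c s : ℝ) :
    HasDerivAt (fun s : ℝ => c * s ^ (n + 1) / ((n + 1)! : ℝ)) (c * s ^ n / (n ! : ℝ)) s := by
  have h := ((hasDerivAt_pow (n + 1) s).const_mul c).div_const ((n + 1)! : ℝ)
  have hne : ((n:ℝ) + 1) ≠ 0 := by positivity
  have hfac : ((n !:ℕ) : ℝ) ≠ 0 := Nat.cast_ne_zero.mpr (Nat.factorial_ne_zero n)
  refine h.congr_deriv ?_
  rw [Nat.factorial_succ]
  push_cast
  field_simp

lemma Ppoly_continuous (m : ℕ) : Continuous (Ppoly m) := by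
  unfold Ppoly
  refine (((continuous_pow m).div_const _).add
    ((continuous_const.mul (continuous_pow (m - 1))).div_const _)).add ?_
  exact continuous_finset_sum _ (fun k _ =>
    (continuous_const.mul (continuous_pow (m - k))).div_const _)

lemma Ppoly_hasDerivAt (m : ℕ) (hm : 1 ≤ m) (s : ℝ) :
    HasDerivAt (Ppoly (m + 1)) (Ppoly m s) s := by
  have e1 : Ppoly (m + 1) = fun s : ℝ => (s ^ (m + 1) / ((m + 1)! : ℝ)
      + Real.log 2 * s ^ m / (m ! : ℝ))
      + ((∑ k ∈ Finset.Icc 2 m, aCoeff k * s ^ (m + 1 - k) / ((m + 1 - k)! : ℝ))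
          + aCoeff (m + 1)) := by
    funext u
    unfold Ppoly
    rw [Finset.sum_Icc_succ_top (by omega : 2 ≤ m + 1)]
    simp only [Nat.add_sub_cancel, Nat.sub_self, pow_zero, Nat.factorial_zero]
    push_cast
    ring
  rw [e1]
  have h1 : HasDerivAt (fun s : ℝ => s ^ (m + 1) / ((m + 1)! : ℝ)) (s ^ m / (m ! : ℝ)) s := by
    have := hasDerivAt_mono m 1 s
    simpa using this
  have h2 : HasDerivAt (fun s : ℝ => Real.log 2 * s ^ m / (m ! : ℝ))
      (Real.log 2 * s ^ (m - 1) / ((m - 1)! : ℝ)) s := by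
    have := hasDerivAt_mono (m - 1) (Real.log 2) s
    rw [Nat.sub_add_cancel hm] at this
    exact this
  have h3 : HasDerivAt (fun s : ℝ => ∑ k ∈ Finset.Icc 2 m,
      aCoeff k * s ^ (m + 1 - k) / ((m + 1 - k)! : ℝ))
      (∑ k ∈ Finset.Icc 2 m, aCoeff k * s ^ (m - k) / ((m - k)! : ℝ)) s := by
    refine HasDerivAt.fun_sum (fun k hk => ?_)
    have hk' : k ≤ m := (Finset.mem_Icc.mp hk).2
    have := hasDerivAt_mono (m - k) (aCoeff k) s
    rw [show m - k + 1 = m + 1 - k by omega] at this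
    exact this
  have := (h1.add h2).add (h3.add (hasDerivAt_const s (aCoeff (m + 1))))
  refine this.congr_deriv ?_
  unfold Ppoly
  ring

lemma Ppoly_zero (m : ℕ) (hm : 2 ≤ m) : Ppoly m 0 = aCoeff m := by
  unfold Ppoly
  rw [zero_pow (by omega : m ≠ 0), zero_pow (by omega : m - 1 ≠ 0)]
  rw [Finset.sum_eq_single m]
  · simp
  · intro k hk hkm
    have : k < m := lt_of_le_of_ne (Finset.mem_Icc.mp hk).2 hkm
    rw [zero_pow (by omega : m - k ≠ 0)]
    ring
  · intro h
    exact absurd (Finset.mem_Icc.mpr ⟨hm, le_rfl⟩) h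

lemma aCoeff_nonneg (m : ℕ) (hm : 1 ≤ m) : 0 ≤ aCoeff m := by
  have := F_nonneg m hm 0
  rw [Real.exp_zero] at this
  exact this

lemma F_le_Ppoly : ∀ m, 1 ≤ m → ∀ s : ℝ, 0 ≤ s → -(Li m (-Real.exp s)) ≤ Ppoly m s := by
  intro m hm
  induction m, hm using Nat.le_induction with
  | base =>
    intro s hs
    rw [F_one]
    have e1 : Ppoly 1 s = s + Real.log 2 := by
      unfold Ppoly
      simp [Finset.Icc_eq_empty_of_lt]
    rw [e1]
    have h1 : (1:ℝ) + Real.exp s ≤ 2 * Real.exp s := by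
      have := Real.one_le_exp hs
      nlinarith
    calc Real.log (1 + Real.exp s) ≤ Real.log (2 * Real.exp s) :=
          Real.log_le_log (by positivity) h1
      _ = s + Real.log 2 := by
          rw [Real.log_mul (by norm_num) (Real.exp_ne_zero s), Real.log_exp]; ring
  | succ n hn ih =>
    intro s hs
    have hF := intervalIntegral.integral_eq_sub_of_hasDerivAt
      (f := fun u => -(Li (n + 1) (-Real.exp u)))
      (fun u _ => F_hasDerivAt n hn u)
      ((F_continuous n hn).intervalIntegrable 0 s)
    have hP := intervalIntegral.integral_eq_sub_of_hasDerivAt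
      (f := Ppoly (n + 1))
      (fun u _ => Ppoly_hasDerivAt n hn u)
      ((Ppoly_continuous n).intervalIntegrable 0 s)
    have hmono : ∫ u in (0:ℝ)..s, -(Li n (-Real.exp u)) ≤ ∫ u in (0:ℝ)..s, Ppoly n u :=
      intervalIntegral.integral_mono_on hs
        ((F_continuous n hn).intervalIntegrable 0 s)
        ((Ppoly_continuous n).intervalIntegrable 0 s)
        (fun u hu => ih u hu.1)
    have hF0 : -(Li (n + 1) (-Real.exp 0)) = aCoeff (n + 1) := by
      rw [Real.exp_zero]; rfl
    have hP0 : Ppoly (n + 1) 0 = aCoeff (n + 1) := Ppoly_zero (n + 1) (by omega)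
    rw [hF0] at hF
    rw [hP0] at hP
    linarith

/-- For `t ≥ L/2 ≥ 0` and `d ≥ 1`, the integral
`∫₀^∞ x^d (1/(1+e^{x-t-L/2}) + 1/(1+e^{x-t+L/2})) dx` equals
`d! (-Li_{d+1}(-e^{t+L/2}) - Li_{d+1}(-e^{t-L/2}))`, and is bounded above by
`d! (P_{d+1}(t+L/2) + P_{d+1}(max(t-L/2,0)) + a_{d+1})`. -/
theorem fermi_dirac_two_term_eq_and_bound (d : ℕ) (hd : 1 ≤ d) (t L : ℝ)
    (ht : 0 ≤ t) (hL : 0 ≤ L) (htL : L / 2 ≤ t) :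
    (∫ x in Set.Ioi (0:ℝ),
        x ^ d * (1 / (1 + Real.exp (x - t - L / 2)) + 1 / (1 + Real.exp (x - t + L / 2))))
      = (d ! : ℝ) * (-(Li (d + 1) (-Real.exp (t + L / 2)))
          - Li (d + 1) (-Real.exp (t - L / 2))) ∧
    (∫ x in Set.Ioi (0:ℝ),
        x ^ d * (1 / (1 + Real.exp (x - t - L / 2)) + 1 / (1 + Real.exp (x - t + L / 2))))
      ≤ (d ! : ℝ) * (Ppoly (d + 1) (t + L / 2) + Ppoly (d + 1) (max (t - L / 2) 0)
          + aCoeff (d + 1)) := by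
  set μ₁ := t + L / 2 with hμ₁
  set μ₂ := t - L / 2 with hμ₂
  have heq : (∫ x in Set.Ioi (0:ℝ),
      x ^ d * (1 / (1 + Real.exp (x - t - L / 2)) + 1 / (1 + Real.exp (x - t + L / 2))))
      = (d ! : ℝ) * (-(Li (d + 1) (-Real.exp μ₁)) - Li (d + 1) (-Real.exp μ₂)) := by
    have hsplit : (∫ x in Set.Ioi (0:ℝ),
        x ^ d * (1 / (1 + Real.exp (x - t - L / 2)) + 1 / (1 + Real.exp (x - t + L / 2))))
        = (∫ x in Set.Ioi (0:ℝ), x ^ d * (1 / (1 + Real.exp (x - μ₁))))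
          + ∫ x in Set.Ioi (0:ℝ), x ^ d * (1 / (1 + Real.exp (x - μ₂))) := by
      rw [← integral_add (integrable_f d μ₁) (integrable_f d μ₂)]
      refine integral_congr_ae (Filter.Eventually.of_forall fun x => ?_)
      simp only []
      rw [show x - t - L / 2 = x - μ₁ by rw [hμ₁]; ring,
        show x - t + L / 2 = x - μ₂ by rw [hμ₂]; ring]
      ring
    rw [hsplit, main_int d hd μ₁, main_int d hd μ₂]
    ring
  refine ⟨heq, ?_⟩
  rw [heq]
  have hμ₂0 : (0:ℝ) ≤ μ₂ := by rw [hμ₂]; linarith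
  have hmax : max μ₂ 0 = μ₂ := max_eq_left hμ₂0
  rw [hmax]
  have b1 := F_le_Ppoly (d + 1) (by omega) μ₁ (by rw [hμ₁]; linarith)
  have b2 := F_le_Ppoly (d + 1) (by omega) μ₂ hμ₂0
  have ha := aCoeff_nonneg (d + 1) (by omega)
  have hfac : (0:ℝ) ≤ (d ! : ℝ) := by positivity
  have hin : -(Li (d + 1) (-Real.exp μ₁)) - Li (d + 1) (-Real.exp μ₂)
      ≤ Ppoly (d + 1) μ₁ + Ppoly (d + 1) μ₂ + aCoeff (d + 1) := by linarith
  exact mul_le_mul_of_nonneg_left hin hfac
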